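/- A compact Kähler manifold M with holomorphically trivial tangent bundle, trivialized by left-invariant fields of a simply connected complex Lie group G acting simply transitively, is a complex torus; equivalently, if every global holomorphic 1-form on M is closed and TM is trivialized by global holomorphic vector fields X_1,...,X_n with constant bracket structure constants, then all structure constants vanish. -/

import Mathlib

open scoped Manifold

/-- Local chart representative of a vector field (see STATEMENT 0). -/
noncomputable def chartField {E : Type*} [NormedAddCommGroup E] [NormedSpace ℂ E]
    {M : Type*} [TopologicalSpace M] [ChartedSpace E M]
    [IsManifold 𝓘(ℂ, E) (⊤ : ℕ∞) M]
    (X : (m : M) → TangentSpace 𝓘(ℂ, E) m) (x : M) : E → E :=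
  fun y =>
    tangentCoordChange 𝓘(ℂ, E) ((extChartAt 𝓘(ℂ, E) x).symm y) x
      ((extChartAt 𝓘(ℂ, E) x).symm y) (X ((extChartAt 𝓘(ℂ, E) x).symm y))

/-- Local chart representative of a holomorphic 1-form. -/
noncomputable def chartForm {E : Type*} [NormedAddCommGroup E] [NormedSpace ℂ E]
    {M : Type*} [TopologicalSpace M] [ChartedSpace E M]
    [IsManifold 𝓘(ℂ, E) (⊤ : ℕ∞) M]
    (ω : (m : M) → TangentSpace 𝓘(ℂ, E) m →L[ℂ] ℂ) (x : M) : E → (E →L[ℂ] ℂ) :=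
  fun y =>
    (ω ((extChartAt 𝓘(ℂ, E) x).symm y)).comp
      (tangentCoordChange 𝓘(ℂ, E) x ((extChartAt 𝓘(ℂ, E) x).symm y)
        ((extChartAt 𝓘(ℂ, E) x).symm y))

section Aux

variable {E : Type*} [NormedAddCommGroup E] [NormedSpace ℂ E]
    {M : Type*} [TopologicalSpace M] [ChartedSpace E M]
    [IsManifold 𝓘(ℂ, E) (⊤ : ℕ∞) M]

/-- The chart representative of a smooth vector field is differentiable at the
center of the chart. -/
theorem chartField_differentiableAt
    (X : (m : M) → TangentSpace 𝓘(ℂ, E) m)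
    (hX : ContMDiff 𝓘(ℂ, E) 𝓘(ℂ, E).tangent (⊤ : ℕ∞)
      (fun m => (⟨m, X m⟩ : TangentBundle 𝓘(ℂ, E) M))) (x : M) :
    DifferentiableAt ℂ (chartField X x) (extChartAt 𝓘(ℂ, E) x x) := by
  have h1 : ContMDiffAt 𝓘(ℂ, E) 𝓘(ℂ, E) (⊤ : ℕ∞)
      (fun m => (trivializationAt E (TangentSpace 𝓘(ℂ, E)) x
        (Bundle.TotalSpace.mk' E m (X m))).2) x :=
    (Bundle.contMDiffAt_section _).1 (hX x)
  have h2 : ContMDiffWithinAt 𝓘(ℂ, E) 𝓘(ℂ, E) (⊤ : ℕ∞)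
      ((fun m => (trivializationAt E (TangentSpace 𝓘(ℂ, E)) x
        (Bundle.TotalSpace.mk' E m (X m))).2) ∘ (extChartAt 𝓘(ℂ, E) x).symm)
      (extChartAt 𝓘(ℂ, E) x).target (extChartAt 𝓘(ℂ, E) x x) := by
    apply ContMDiffAt.comp_contMDiffWithinAt (I' := 𝓘(ℂ, E))
    · rw [(extChartAt 𝓘(ℂ, E) x).left_inv (mem_extChartAt_source x)]
      exact h1
    · exact contMDiffOn_extChartAt_symm x _ (mem_extChartAt_target x)
  have h3 := h2.contMDiffAt (extChartAt_target_mem_nhds x)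
  have h4 := (contMDiffAt_iff_contDiffAt.1 h3).differentiableAt (by simp)
  exact h4

theorem tcc_left_inv (x : M) {y : E} (hy : y ∈ (extChartAt 𝓘(ℂ, E) x).target) (v : E) :
    tangentCoordChange 𝓘(ℂ, E) ((extChartAt 𝓘(ℂ, E) x).symm y) x
        ((extChartAt 𝓘(ℂ, E) x).symm y)
      (tangentCoordChange 𝓘(ℂ, E) x ((extChartAt 𝓘(ℂ, E) x).symm y)
        ((extChartAt 𝓘(ℂ, E) x).symm y) v) = v := by
  have hp : (extChartAt 𝓘(ℂ, E) x).symm y ∈ (extChartAt 𝓘(ℂ, E) x).source :=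
    (extChartAt 𝓘(ℂ, E) x).map_target hy
  have hp' := mem_extChartAt_source (I := 𝓘(ℂ, E)) ((extChartAt 𝓘(ℂ, E) x).symm y)
  rw [tangentCoordChange_comp ⟨⟨hp, hp'⟩, hp⟩, tangentCoordChange_self hp]

theorem tcc_right_inv (x : M) {y : E} (hy : y ∈ (extChartAt 𝓘(ℂ, E) x).target) (v : E) :
    tangentCoordChange 𝓘(ℂ, E) x ((extChartAt 𝓘(ℂ, E) x).symm y)
        ((extChartAt 𝓘(ℂ, E) x).symm y)
      (tangentCoordChange 𝓘(ℂ, E) ((extChartAt 𝓘(ℂ, E) x).symm y) x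
        ((extChartAt 𝓘(ℂ, E) x).symm y) v) = v := by
  have hp : (extChartAt 𝓘(ℂ, E) x).symm y ∈ (extChartAt 𝓘(ℂ, E) x).source :=
    (extChartAt 𝓘(ℂ, E) x).map_target hy
  have hp' := mem_extChartAt_source (I := 𝓘(ℂ, E)) ((extChartAt 𝓘(ℂ, E) x).symm y)
  rw [tangentCoordChange_comp ⟨⟨hp', hp⟩, hp'⟩, tangentCoordChange_self hp']

end Aux

theorem stmt_3 {E : Type*} [NormedAddCommGroup E] [NormedSpace ℂ E]
    {M : Type*} [TopologicalSpace M] [ChartedSpace E M]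
    [IsManifold 𝓘(ℂ, E) (⊤ : ℕ∞) M]
    [CompactSpace M] [ConnectedSpace M]
    (n : ℕ) (hn : Module.finrank ℂ E = n)
    (X : Fin n → (m : M) → TangentSpace 𝓘(ℂ, E) m)
    (hX : ∀ i, ContMDiff 𝓘(ℂ, E) 𝓘(ℂ, E).tangent (⊤ : ℕ∞)
      (fun m => (⟨m, X i m⟩ : TangentBundle 𝓘(ℂ, E) M)))
    (hspan : ∀ m : M, Submodule.span ℂ (Set.range fun i => X i m) = ⊤)
    -- constant structure constants: [X_i, X_j] = Σ_k c_k^{ij} X_k in charts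
    (c : Fin n → Fin n → Fin n → ℂ)
    (hbracket : ∀ i j, ∀ x : M,
      VectorField.lieBracket ℂ (chartField (X i) x) (chartField (X j) x)
        (extChartAt 𝓘(ℂ, E) x x) = ∑ k, c i j k • X k x)
    -- the Kähler hypothesis, used only through: every global holomorphic
    -- 1-form on M is closed
    (hclosed : ∀ ω : (m : M) → TangentSpace 𝓘(ℂ, E) m →L[ℂ] ℂ,
      (∀ x : M, DifferentiableAt ℂ (chartForm ω x) (extChartAt 𝓘(ℂ, E) x x)) →
      ∀ x : M, ∀ u v : E,
        fderiv ℂ (chartForm ω x) (extChartAt 𝓘(ℂ, E) x x) u v =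
          fderiv ℂ (chartForm ω x) (extChartAt 𝓘(ℂ, E) x x) v u) :
    ∀ i j k, c i j k = 0 := by
  intro i j k
  haveI : FiniteDimensional ℂ E := Module.finite_of_finrank_pos (by rw [hn]; exact i.pos)
  haveI : CompleteSpace E := FiniteDimensional.complete ℂ E
  have hcard : Fintype.card (Fin n) = Module.finrank ℂ E := by simp [hn]
  -- bases at each point
  let B : (m : M) → Module.Basis (Fin n) ℂ E := fun m =>
    basisOfTopLeSpanOfCardEqFinrank (fun i' => X i' m) (hspan m).ge hcard
  have hB : ∀ (m : M) (i' : Fin n), B m i' = X i' m := fun m i' => by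
    simp only [B, coe_basisOfTopLeSpanOfCardEqFinrank]
    exact congrFun (coe_basisOfTopLeSpanOfCardEqFinrank (fun i' => X i' m) (hspan m).ge hcard) i'
  -- the dual 1-form
  let ω : (m : M) → TangentSpace 𝓘(ℂ, E) m →L[ℂ] ℂ := fun m =>
    (LinearMap.toContinuousLinearMap ((B m).coord k) : E →L[ℂ] ℂ)
  -- evaluation of the chart representative of ω on the chart frame
  have key : ∀ x : M, ∀ y ∈ (extChartAt 𝓘(ℂ, E) x).target, ∀ i' : Fin n,
      chartForm ω x y (chartField (X i') x y) = if i' = k then 1 else 0 := by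
    intro x y hy i'
    have hp' := mem_extChartAt_source (I := 𝓘(ℂ, E)) ((extChartAt 𝓘(ℂ, E) x).symm y)
    show ω _ (tangentCoordChange 𝓘(ℂ, E) x _ _
        (tangentCoordChange 𝓘(ℂ, E) _ x _ (X i' _))) = _
    erw [tcc_right_inv x hy]
    show ((B _).coord k) (X i' _) = _
    rw [← hB]
    simp [Module.Basis.coord_apply, Module.Basis.repr_self, Finsupp.single_apply]
  -- the chart frame spans
  have spanF : ∀ x : M, ∀ y ∈ (extChartAt 𝓘(ℂ, E) x).target,
      Submodule.span ℂ (Set.range fun i' => chartField (X i') x y) = (⊤ : Submodule ℂ E) := by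
    intro x y hy
    set p := (extChartAt 𝓘(ℂ, E) x).symm y with hp_def
    have hsurj : Function.Surjective
        (tangentCoordChange 𝓘(ℂ, E) p x p : E →L[ℂ] E) := fun v =>
      ⟨tangentCoordChange 𝓘(ℂ, E) x p p v, tcc_left_inv x hy v⟩
    have h1 : (fun i' => chartField (X i') x y)
        = (tangentCoordChange 𝓘(ℂ, E) p x p : E →L[ℂ] E) ∘ (fun i' => X i' p) := rfl
    erw [h1, Set.range_comp, Submodule.span_image, hspan p, Submodule.map_top,
      LinearMap.range_eq_top.2 hsurj]
  -- differentiability of the chart frame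
  have hdiff : ∀ (x : M) (i' : Fin n),
      DifferentiableAt ℂ (chartField (X i') x) (extChartAt 𝓘(ℂ, E) x x) :=
    fun x i' => chartField_differentiableAt (X i') (hX i') x
  -- ω is holomorphic
  have hform : ∀ x : M, DifferentiableAt ℂ (chartForm ω x) (extChartAt 𝓘(ℂ, E) x x) := by
    intro x
    set y0 := extChartAt 𝓘(ℂ, E) x x with hy0
    have hU : (extChartAt 𝓘(ℂ, E) x).target ∈ nhds y0 := extChartAt_target_mem_nhds x
    -- the frame as an endomorphism-valued map
    set Ψ : E → E →L[ℂ] E := fun y => ∑ i',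
      (LinearMap.toContinuousLinearMap ((B x).coord i')).smulRight (chartField (X i') x y)
      with hΨ
    have hΨdiff : DifferentiableAt ℂ Ψ y0 := by
      apply DifferentiableAt.fun_sum
      intro i' _
      exact ((ContinuousLinearMap.smulRightL ℂ E E
        (LinearMap.toContinuousLinearMap ((B x).coord i'))).differentiableAt).comp y0
        (hdiff x i')
    have hΨapp : ∀ (y : E) (i' : Fin n), Ψ y (X i' x) = chartField (X i') x y := by
      intro y i'
      simp only [hΨ, ContinuousLinearMap.coe_sum', Finset.sum_apply,
        ContinuousLinearMap.smulRight_apply, LinearMap.coe_toContinuousLinearMap']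
      erw [Finset.sum_apply]
      rw [Finset.sum_eq_single i']
      · erw [ContinuousLinearMap.smulRight_apply, LinearMap.coe_toContinuousLinearMap']
        rw [← hB x i', Module.Basis.coord_apply, Module.Basis.repr_self, Finsupp.single_apply,
          if_pos rfl, one_smul]
      · intro b _ hb
        erw [ContinuousLinearMap.smulRight_apply, LinearMap.coe_toContinuousLinearMap']
        rw [← hB x i', Module.Basis.coord_apply, Module.Basis.repr_self, Finsupp.single_apply,
          if_neg (by simpa using (Ne.symm hb)), zero_smul]
      · intro h; exact absurd (Finset.mem_univ i') h
    have hunit : ∀ y ∈ (extChartAt 𝓘(ℂ, E) x).target, IsUnit (Ψ y) := by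
      intro y hy
      let By : Module.Basis (Fin n) ℂ E := basisOfTopLeSpanOfCardEqFinrank
        (fun i' => chartField (X i') x y) (spanF x y hy).ge hcard
      let e : E ≃ₗ[ℂ] E := (B x).equiv By (Equiv.refl _)
      have he : ∀ i', e (X i' x) = chartField (X i') x y := by
        intro i'
        rw [← hB x i']
        show ((B x).equiv By (Equiv.refl _)) (B x i') = _
        rw [Module.Basis.equiv_apply]
        simp [By, coe_basisOfTopLeSpanOfCardEqFinrank]
      have heΨ : ∀ v, Ψ y v = e v := by
        intro v
        have hlin : (Ψ y).toLinearMap = (e : E →ₗ[ℂ] E) := by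
          apply (B x).ext
          intro i'
          simp only [ContinuousLinearMap.coe_coe, LinearEquiv.coe_coe]
          rw [hB x i', hΨapp y i', he i']
        exact DFunLike.congr_fun hlin v
      refine isUnit_iff_exists.2 ⟨LinearMap.toContinuousLinearMap (e.symm : E →ₗ[ℂ] E), ?_, ?_⟩
      · ext v
        simp [ContinuousLinearMap.mul_apply, heΨ]
      · ext v
        simp [ContinuousLinearMap.mul_apply, heΨ]
    -- identification of chartForm ω with the k-th row of the inverse of Ψ
    have hφ : ∀ y ∈ (extChartAt 𝓘(ℂ, E) x).target, chartForm ω x y =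
        (LinearMap.toContinuousLinearMap ((B x).coord k)).comp (Ring.inverse (Ψ y)) := by
      intro y hy
      let By : Module.Basis (Fin n) ℂ E := basisOfTopLeSpanOfCardEqFinrank
        (fun i' => chartField (X i') x y) (spanF x y hy).ge hcard
      have hBy : ∀ i', By i' = chartField (X i') x y := fun i' => by
        simp [By, coe_basisOfTopLeSpanOfCardEqFinrank]
      apply ContinuousLinearMap.coe_injective
      apply By.ext
      intro i'
      have h1 : chartForm ω x y (By i') = if i' = k then 1 else 0 := by
        rw [hBy]; exact key x y hy i'
      have h2 : (Ring.inverse (Ψ y)) (By i') = X i' x := by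
        rw [hBy, ← hΨapp y i']
        have := Ring.inverse_mul_cancel _ (hunit y hy)
        calc (Ring.inverse (Ψ y)) (Ψ y (X i' x))
            = ((Ring.inverse (Ψ y)) * (Ψ y)) (X i' x) := rfl
          _ = (show E from X i' x) := by rw [this]; rfl
      show chartForm ω x y (By i') = _
      rw [h1]
      show _ = (((B x).coord k) ((Ring.inverse (Ψ y)) (By i')) : ℂ)
      rw [h2, ← hB x i', Module.Basis.coord_apply, Module.Basis.repr_self, Finsupp.single_apply]
    have heq : chartForm ω x =ᶠ[nhds y0] fun y =>
        (LinearMap.toContinuousLinearMap ((B x).coord k)).comp (Ring.inverse (Ψ y)) :=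
      Filter.eventuallyEq_of_mem hU hφ
    have hd : DifferentiableAt ℂ (fun y =>
        (LinearMap.toContinuousLinearMap ((B x).coord k)).comp (Ring.inverse (Ψ y))) y0 := by
      have h1 : DifferentiableAt ℂ (fun y => Ring.inverse (Ψ y)) y0 :=
        hΨdiff.inverse (hunit y0 (mem_extChartAt_target x))
      exact ((ContinuousLinearMap.compL ℂ E E ℂ
        (LinearMap.toContinuousLinearMap ((B x).coord k))).differentiableAt).comp y0 h1
    exact hd.congr_of_eventuallyEq heq
  -- the symmetry of the derivative of the chart representative of ω
  have hsym := hclosed ω hform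
  -- now the computation at an arbitrary point
  obtain ⟨x⟩ : Nonempty M := inferInstance
  set y0 := extChartAt 𝓘(ℂ, E) x x with hy0
  have hy0t : y0 ∈ (extChartAt 𝓘(ℂ, E) x).target := mem_extChartAt_target x
  have hsymm : (extChartAt 𝓘(ℂ, E) x).symm y0 = x :=
    (extChartAt 𝓘(ℂ, E) x).left_inv (mem_extChartAt_source x)
  have hF0 : ∀ i' : Fin n, chartField (X i') x y0 = X i' x := by
    intro i'
    show tangentCoordChange 𝓘(ℂ, E) _ x _ (X i' _) = X i' x
    rw [hsymm]
    exact tangentCoordChange_self (mem_extChartAt_source x)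
  have hω0 : ∀ v : E, chartForm ω x y0 v = ((B x).coord k) v := by
    intro v
    show ω _ (tangentCoordChange 𝓘(ℂ, E) x _ _ v) = _
    rw [hsymm, tangentCoordChange_self (mem_extChartAt_source x)]
    rfl
  -- constancy of ω applied to the frame
  have hconst : ∀ i' : Fin n,
      fderiv ℂ (fun y => chartForm ω x y (chartField (X i') x y)) y0 = 0 := by
    intro i'
    have heq : (fun y => chartForm ω x y (chartField (X i') x y)) =ᶠ[nhds y0]
        (fun _ => if i' = k then 1 else 0) :=
      Filter.eventuallyEq_of_mem (extChartAt_target_mem_nhds x) (fun y hy => key x y hy i')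
    rw [heq.fderiv_eq]
    exact fderiv_const_apply _
  -- product rule
  have hprod : ∀ (i' : Fin n) (v : E),
      chartForm ω x y0 (fderiv ℂ (chartField (X i') x) y0 v)
        + fderiv ℂ (chartForm ω x) y0 v (chartField (X i') x y0) = 0 := by
    intro i' v
    have h := fderiv_clm_apply (hform x) (hdiff x i')
    have h2 := DFunLike.congr_fun (hconst i') v
    rw [h] at h2
    simpa [ContinuousLinearMap.add_apply, ContinuousLinearMap.flip_apply, hy0] using h2
  have h1 := hprod i (chartField (X j) x y0)
  have h2 := hprod j (chartField (X i) x y0)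
  rw [hF0 i, hF0 j] at h1 h2
  have hsd := hsym x (X i x) (X j x)
  -- ω_x of the Lie bracket vanishes
  have hzero : chartForm ω x y0
      (VectorField.lieBracket ℂ (chartField (X i) x) (chartField (X j) x) y0) = 0 := by
    rw [VectorField.lieBracket, map_sub]
    rw [hF0 i, hF0 j]
    -- h1 : ω(D F_i (X j x)) + Dφ (X j x) (X i x) = 0
    -- h2 : ω(D F_j (X i x)) + Dφ (X i x) (X j x) = 0
    -- hsd : Dφ (X i x)(X j x) = Dφ (X j x)(X i x)
    have := congrArg₂ (· - ·) h2 h1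
    simp only [sub_zero] at this
    linear_combination h2 - h1 - hsd
  rw [hbracket i j x] at hzero
  -- compute the left-hand side
  have : chartForm ω x y0 (∑ k', c i j k' • X k' x) = c i j k := by
    rw [hω0]
    erw [map_sum]
    have : ∀ k' : Fin n, ((B x).coord k) (c i j k' • X k' x)
        = c i j k' * (if k' = k then 1 else 0) := by
      intro k'
      erw [map_smul, ← hB x k', Module.Basis.coord_apply, Module.Basis.repr_self, Finsupp.single_apply]
      simp [smul_eq_mul]
    simp only [this]
    rw [Finset.sum_eq_single k]
    · simp
    · intro b _ hb; simp [hb]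
    · intro h; exact absurd (Finset.mem_univ k) h
  erw [this] at hzero
  exact hzero
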